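/- For a metric d on X with |X| = n ≥ 4 and any q ≥ 1, the q-average hyperbolicity is bounded by twice the q-average ultrametricity: AvgHyp_q(d)^q ≤ 2^q · AvgUM_q(d)^q, i.e., AvgHyp_q(d) ≤ 2·AvgUM_q(d). -/

import Mathlib

noncomputable section

variable {Xt : Type*}

/-- Gromov product of `x,y` with base `w`. -/
def gp (d : Xt → Xt → ℝ) (w x y : Xt) : ℝ := (d x w + d y w - d x y) / 2

/-- One term of the four point condition. -/
def fpt (d : Xt → Xt → ℝ) (w x y z : Xt) : ℝ :=
  min (gp d w x z) (gp d w y z) - gp d w x y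

/-- Four point condition with base `w`: max over all permutations of the triple `x,y,z`. -/
def fp (d : Xt → Xt → ℝ) (w x y z : Xt) : ℝ :=
  max (max (max (fpt d w x y z) (fpt d w x z y)) (max (fpt d w y x z) (fpt d w y z x)))
      (max (fpt d w z x y) (fpt d w z y x))

/-- One term of the three point condition. -/
def tpt (d : Xt → Xt → ℝ) (x y z : Xt) : ℝ := d x z - max (d x y) (d y z)

/-- Three point condition: max over all permutations of `x,y,z`. -/
def tp (d : Xt → Xt → ℝ) (x y z : Xt) : ℝ :=
  max (max (max (tpt d x y z) (tpt d x z y)) (max (tpt d y x z) (tpt d y z x)))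
      (max (tpt d z x y) (tpt d z y x))

lemma core (p a b c e f t1 t2 t3 t4 : ℝ)
    (h1 : 0 ≤ t1) (h1a : p - max a b ≤ t1) (h1b : a - max p b ≤ t1) (h1c : b - max p a ≤ t1)
    (h2 : 0 ≤ t2) (h2a : p - max c e ≤ t2) (h2b : c - max p e ≤ t2) (h2c : e - max p c ≤ t2)
    (h3 : 0 ≤ t3) (h3a : a - max c f ≤ t3) (h3b : c - max a f ≤ t3) (h3c : f - max a c ≤ t3)
    (h4 : 0 ≤ t4) (h4a : b - max e f ≤ t4) (h4b : e - max b f ≤ t4) (h4c : f - max b e ≤ t4)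
    (hS : b + c ≤ a + e) :
    p + f - (a + e) ≤ t1 + t2 + t3 + t4 := by
  rcases le_total b a with hab | hab
  · -- a max
    rcases le_total f e with hef | hef
    · -- e max
      linarith [max_eq_left hab, max_eq_left hef]
    · -- f max
      rcases le_total e b with hbe | hbe
      · -- b max
        rcases le_total e c with hce | hce
        · -- c max
          linarith [max_eq_left hab, max_eq_right hef, max_eq_left hbe, max_eq_left hce]
        · -- e max
          linarith [max_eq_left hab, max_eq_right hef, max_eq_left hbe, max_eq_right hce]
      · -- e max
        linarith [max_eq_left hab, max_eq_right hef, max_eq_right hbe]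
  · -- b max
    rcases le_total f c with hcf | hcf
    · -- c max
      linarith [max_eq_right hab, max_eq_left hcf]
    · -- f max
      rcases le_total c a with hac | hac
      · -- a max
        rcases le_total e c with hce | hce
        · -- c max
          linarith [max_eq_right hab, max_eq_right hcf, max_eq_left hac, max_eq_left hce]
        · -- e max
          linarith [max_eq_right hab, max_eq_right hcf, max_eq_left hac, max_eq_right hce]
      · -- c max
        linarith [max_eq_right hab, max_eq_right hcf, max_eq_right hac]
lemma nonneg_aux (u v w t : ℝ) (hA : u - max v w ≤ t) (hB : v - max u w ≤ t)
    (hC : w - max u v ≤ t) : 0 ≤ t := by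
  rcases le_total w v with h | h
  · rw [max_eq_left h] at hA
    rcases le_total v u with h2 | h2
    · linarith
    · linarith [hB, max_le h2 h]
  · rw [max_eq_right h] at hA
    rcases le_total w u with h2 | h2
    · linarith
    · linarith [hC, max_le h2 h]

lemma key {Xt : Type*} (d : Xt → Xt → ℝ) (hs : ∀ a b, d a b = d b a) (w x y z : Xt) :
    fp d w x y z ≤ (tp d x y z + tp d x y w + tp d x z w + tp d y z w) / 2 := by
  have B1_ap : (d x z) - max (d x y) (d y z) ≤ tp d x y z := by
    have h : tpt d x y z ≤ tp d x y z := by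
      simp only [tp]
      exact ((le_max_left _ _).trans (le_max_left _ _)).trans (le_max_left _ _)
    simp only [tpt] at h
    exact h
  have B1_pa : (d x y) - max (d x z) (d y z) ≤ tp d x y z := by
    have h : tpt d x z y ≤ tp d x y z := by
      simp only [tp]
      exact ((le_max_right _ _).trans (le_max_left _ _)).trans (le_max_left _ _)
    simp only [tpt] at h
    rw [hs z y] at h
    exact h
  have B1_bp : (d y z) - max (d x y) (d x z) ≤ tp d x y z := by
    have h : tpt d y x z ≤ tp d x y z := by
      simp only [tp]
      exact ((le_max_left _ _).trans (le_max_right _ _)).trans (le_max_left _ _)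
    simp only [tpt] at h
    rw [hs y x] at h
    exact h
  have B1_pb : (d x y) - max (d y z) (d x z) ≤ tp d x y z := by
    have h : tpt d y z x ≤ tp d x y z := by
      simp only [tp]
      exact ((le_max_right _ _).trans (le_max_right _ _)).trans (le_max_left _ _)
    simp only [tpt] at h
    rw [hs y x, hs z x] at h
    exact h
  have B1_ba : (d y z) - max (d x z) (d x y) ≤ tp d x y z := by
    have h : tpt d z x y ≤ tp d x y z := by
      simp only [tp]
      exact (le_max_left _ _).trans (le_max_right _ _)
    simp only [tpt] at h
    rw [hs z y, hs z x] at h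
    exact h
  have B1_ab : (d x z) - max (d y z) (d x y) ≤ tp d x y z := by
    have h : tpt d z y x ≤ tp d x y z := by
      simp only [tp]
      exact (le_max_right _ _).trans (le_max_right _ _)
    simp only [tpt] at h
    rw [hs z x, hs z y, hs y x] at h
    exact h
  have B2_cp : (d x w) - max (d x y) (d y w) ≤ tp d x y w := by
    have h : tpt d x y w ≤ tp d x y w := by
      simp only [tp]
      exact ((le_max_left _ _).trans (le_max_left _ _)).trans (le_max_left _ _)
    simp only [tpt] at h
    exact h
  have B2_pc : (d x y) - max (d x w) (d y w) ≤ tp d x y w := by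
    have h : tpt d x w y ≤ tp d x y w := by
      simp only [tp]
      exact ((le_max_right _ _).trans (le_max_left _ _)).trans (le_max_left _ _)
    simp only [tpt] at h
    rw [hs w y] at h
    exact h
  have B2_ep : (d y w) - max (d x y) (d x w) ≤ tp d x y w := by
    have h : tpt d y x w ≤ tp d x y w := by
      simp only [tp]
      exact ((le_max_left _ _).trans (le_max_right _ _)).trans (le_max_left _ _)
    simp only [tpt] at h
    rw [hs y x] at h
    exact h
  have B2_pe : (d x y) - max (d y w) (d x w) ≤ tp d x y w := by
    have h : tpt d y w x ≤ tp d x y w := by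
      simp only [tp]
      exact ((le_max_right _ _).trans (le_max_right _ _)).trans (le_max_left _ _)
    simp only [tpt] at h
    rw [hs y x, hs w x] at h
    exact h
  have B2_ec : (d y w) - max (d x w) (d x y) ≤ tp d x y w := by
    have h : tpt d w x y ≤ tp d x y w := by
      simp only [tp]
      exact (le_max_left _ _).trans (le_max_right _ _)
    simp only [tpt] at h
    rw [hs w y, hs w x] at h
    exact h
  have B2_ce : (d x w) - max (d y w) (d x y) ≤ tp d x y w := by
    have h : tpt d w y x ≤ tp d x y w := by
      simp only [tp]
      exact (le_max_right _ _).trans (le_max_right _ _)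
    simp only [tpt] at h
    rw [hs w x, hs w y, hs y x] at h
    exact h
  have B3_ca : (d x w) - max (d x z) (d z w) ≤ tp d x z w := by
    have h : tpt d x z w ≤ tp d x z w := by
      simp only [tp]
      exact ((le_max_left _ _).trans (le_max_left _ _)).trans (le_max_left _ _)
    simp only [tpt] at h
    exact h
  have B3_ac : (d x z) - max (d x w) (d z w) ≤ tp d x z w := by
    have h : tpt d x w z ≤ tp d x z w := by
      simp only [tp]
      exact ((le_max_right _ _).trans (le_max_left _ _)).trans (le_max_left _ _)
    simp only [tpt] at h
    rw [hs w z] at h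
    exact h
  have B3_fa : (d z w) - max (d x z) (d x w) ≤ tp d x z w := by
    have h : tpt d z x w ≤ tp d x z w := by
      simp only [tp]
      exact ((le_max_left _ _).trans (le_max_right _ _)).trans (le_max_left _ _)
    simp only [tpt] at h
    rw [hs z x] at h
    exact h
  have B3_af : (d x z) - max (d z w) (d x w) ≤ tp d x z w := by
    have h : tpt d z w x ≤ tp d x z w := by
      simp only [tp]
      exact ((le_max_right _ _).trans (le_max_right _ _)).trans (le_max_left _ _)
    simp only [tpt] at h
    rw [hs z x, hs w x] at h
    exact h
  have B3_fc : (d z w) - max (d x w) (d x z) ≤ tp d x z w := by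
    have h : tpt d w x z ≤ tp d x z w := by
      simp only [tp]
      exact (le_max_left _ _).trans (le_max_right _ _)
    simp only [tpt] at h
    rw [hs w z, hs w x] at h
    exact h
  have B3_cf : (d x w) - max (d z w) (d x z) ≤ tp d x z w := by
    have h : tpt d w z x ≤ tp d x z w := by
      simp only [tp]
      exact (le_max_right _ _).trans (le_max_right _ _)
    simp only [tpt] at h
    rw [hs w x, hs w z, hs z x] at h
    exact h
  have B4_eb : (d y w) - max (d y z) (d z w) ≤ tp d y z w := by
    have h : tpt d y z w ≤ tp d y z w := by
      simp only [tp]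
      exact ((le_max_left _ _).trans (le_max_left _ _)).trans (le_max_left _ _)
    simp only [tpt] at h
    exact h
  have B4_be : (d y z) - max (d y w) (d z w) ≤ tp d y z w := by
    have h : tpt d y w z ≤ tp d y z w := by
      simp only [tp]
      exact ((le_max_right _ _).trans (le_max_left _ _)).trans (le_max_left _ _)
    simp only [tpt] at h
    rw [hs w z] at h
    exact h
  have B4_fb : (d z w) - max (d y z) (d y w) ≤ tp d y z w := by
    have h : tpt d z y w ≤ tp d y z w := by
      simp only [tp]
      exact ((le_max_left _ _).trans (le_max_right _ _)).trans (le_max_left _ _)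
    simp only [tpt] at h
    rw [hs z y] at h
    exact h
  have B4_bf : (d y z) - max (d z w) (d y w) ≤ tp d y z w := by
    have h : tpt d z w y ≤ tp d y z w := by
      simp only [tp]
      exact ((le_max_right _ _).trans (le_max_right _ _)).trans (le_max_left _ _)
    simp only [tpt] at h
    rw [hs z y, hs w y] at h
    exact h
  have B4_fe : (d z w) - max (d y w) (d y z) ≤ tp d y z w := by
    have h : tpt d w y z ≤ tp d y z w := by
      simp only [tp]
      exact (le_max_left _ _).trans (le_max_right _ _)
    simp only [tpt] at h
    rw [hs w z, hs w y] at h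
    exact h
  have B4_ef : (d y w) - max (d z w) (d y z) ≤ tp d y z w := by
    have h : tpt d w z y ≤ tp d y z w := by
      simp only [tp]
      exact (le_max_right _ _).trans (le_max_right _ _)
    simp only [tpt] at h
    rw [hs w y, hs w z, hs z y] at h
    exact h
  have N1 : 0 ≤ tp d x y z := nonneg_aux (d x y) (d x z) (d y z) _ B1_pa B1_ap B1_bp
  have N2 : 0 ≤ tp d x y w := nonneg_aux (d x y) (d x w) (d y w) _ B2_pc B2_cp B2_ep
  have N3 : 0 ≤ tp d x z w := nonneg_aux (d x z) (d x w) (d z w) _ B3_ac B3_ca B3_fa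
  have N4 : 0 ≤ tp d y z w := nonneg_aux (d y z) (d y w) (d z w) _ B4_be B4_eb B4_fb
  simp only [fp]
  refine max_le (max_le (max_le ?_ ?_) (max_le ?_ ?_)) (max_le ?_ ?_)
  · -- fpt d w x y z
    simp only [fpt]
    rcases le_total (gp d w x z) (gp d w y z) with h | h
    · rw [min_eq_left h]
      simp only [gp] at h ⊢
      have hS : (d y z) + (d x w) ≤ (d x z) + (d y w) := by
        linarith [hs y x, hs z x, hs z y, hs w x, hs w y, hs w z]
      linarith [core (d x y) (d x z) (d y z) (d x w) (d y w) (d z w) _ _ _ _ N1 B1_pa B1_ap B1_bp N2 B2_pc B2_cp B2_ep N3 B3_ac B3_ca B3_fa N4 B4_be B4_eb B4_fb hS, hs y x, hs z x, hs z y, hs w x, hs w y, hs w z]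
    · rw [min_eq_right h]
      simp only [gp] at h ⊢
      have hS : (d x z) + (d y w) ≤ (d y z) + (d x w) := by
        linarith [hs y x, hs z x, hs z y, hs w x, hs w y, hs w z]
      linarith [core (d x y) (d y z) (d x z) (d y w) (d x w) (d z w) _ _ _ _ N1 B1_pb B1_bp B1_ap N2 B2_pe B2_ep B2_cp N4 B4_be B4_eb B4_fb N3 B3_ac B3_ca B3_fa hS, hs y x, hs z x, hs z y, hs w x, hs w y, hs w z]
  · -- fpt d w x z y
    simp only [fpt]
    rcases le_total (gp d w x y) (gp d w z y) with h | h
    · rw [min_eq_left h]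
      simp only [gp] at h ⊢
      have hS : (d y z) + (d x w) ≤ (d x y) + (d z w) := by
        linarith [hs y x, hs z x, hs z y, hs w x, hs w y, hs w z]
      linarith [core (d x z) (d x y) (d y z) (d x w) (d z w) (d y w) _ _ _ _ N1 B1_ap B1_pa B1_ba N3 B3_ac B3_ca B3_fa N2 B2_pc B2_cp B2_ep N4 B4_bf B4_fb B4_eb hS, hs y x, hs z x, hs z y, hs w x, hs w y, hs w z]
    · rw [min_eq_right h]
      simp only [gp] at h ⊢
      have hS : (d x y) + (d z w) ≤ (d y z) + (d x w) := by
        linarith [hs y x, hs z x, hs z y, hs w x, hs w y, hs w z]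
      linarith [core (d x z) (d y z) (d x y) (d z w) (d x w) (d y w) _ _ _ _ N1 B1_ab B1_ba B1_pa N3 B3_af B3_fa B3_ca N4 B4_bf B4_fb B4_eb N2 B2_pc B2_cp B2_ep hS, hs y x, hs z x, hs z y, hs w x, hs w y, hs w z]
  · -- fpt d w y x z
    simp only [fpt]
    rcases le_total (gp d w y z) (gp d w x z) with h | h
    · rw [min_eq_left h]
      simp only [gp] at h ⊢
      have hS : (d x z) + (d y w) ≤ (d y z) + (d x w) := by
        linarith [hs y x, hs z x, hs z y, hs w x, hs w y, hs w z]
      linarith [core (d x y) (d y z) (d x z) (d y w) (d x w) (d z w) _ _ _ _ N1 B1_pb B1_bp B1_ap N2 B2_pe B2_ep B2_cp N4 B4_be B4_eb B4_fb N3 B3_ac B3_ca B3_fa hS, hs y x, hs z x, hs z y, hs w x, hs w y, hs w z]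
    · rw [min_eq_right h]
      simp only [gp] at h ⊢
      have hS : (d y z) + (d x w) ≤ (d x z) + (d y w) := by
        linarith [hs y x, hs z x, hs z y, hs w x, hs w y, hs w z]
      linarith [core (d x y) (d x z) (d y z) (d x w) (d y w) (d z w) _ _ _ _ N1 B1_pa B1_ap B1_bp N2 B2_pc B2_cp B2_ep N3 B3_ac B3_ca B3_fa N4 B4_be B4_eb B4_fb hS, hs y x, hs z x, hs z y, hs w x, hs w y, hs w z]
  · -- fpt d w y z x
    simp only [fpt]
    rcases le_total (gp d w y x) (gp d w z x) with h | h
    · rw [min_eq_left h]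
      simp only [gp] at h ⊢
      have hS : (d x z) + (d y w) ≤ (d x y) + (d z w) := by
        linarith [hs y x, hs z x, hs z y, hs w x, hs w y, hs w z]
      linarith [core (d y z) (d x y) (d x z) (d y w) (d z w) (d x w) _ _ _ _ N1 B1_bp B1_pb B1_ab N4 B4_be B4_eb B4_fb N2 B2_pe B2_ep B2_cp N3 B3_af B3_fa B3_ca hS, hs y x, hs z x, hs z y, hs w x, hs w y, hs w z]
    · rw [min_eq_right h]
      simp only [gp] at h ⊢
      have hS : (d x y) + (d z w) ≤ (d x z) + (d y w) := by
        linarith [hs y x, hs z x, hs z y, hs w x, hs w y, hs w z]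
      linarith [core (d y z) (d x z) (d x y) (d z w) (d y w) (d x w) _ _ _ _ N1 B1_ba B1_ab B1_pb N4 B4_bf B4_fb B4_eb N3 B3_af B3_fa B3_ca N2 B2_pe B2_ep B2_cp hS, hs y x, hs z x, hs z y, hs w x, hs w y, hs w z]
  · -- fpt d w z x y
    simp only [fpt]
    rcases le_total (gp d w z y) (gp d w x y) with h | h
    · rw [min_eq_left h]
      simp only [gp] at h ⊢
      have hS : (d x y) + (d z w) ≤ (d y z) + (d x w) := by
        linarith [hs y x, hs z x, hs z y, hs w x, hs w y, hs w z]
      linarith [core (d x z) (d y z) (d x y) (d z w) (d x w) (d y w) _ _ _ _ N1 B1_ab B1_ba B1_pa N3 B3_af B3_fa B3_ca N4 B4_bf B4_fb B4_eb N2 B2_pc B2_cp B2_ep hS, hs y x, hs z x, hs z y, hs w x, hs w y, hs w z]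
    · rw [min_eq_right h]
      simp only [gp] at h ⊢
      have hS : (d y z) + (d x w) ≤ (d x y) + (d z w) := by
        linarith [hs y x, hs z x, hs z y, hs w x, hs w y, hs w z]
      linarith [core (d x z) (d x y) (d y z) (d x w) (d z w) (d y w) _ _ _ _ N1 B1_ap B1_pa B1_ba N3 B3_ac B3_ca B3_fa N2 B2_pc B2_cp B2_ep N4 B4_bf B4_fb B4_eb hS, hs y x, hs z x, hs z y, hs w x, hs w y, hs w z]
  · -- fpt d w z y x
    simp only [fpt]
    rcases le_total (gp d w z x) (gp d w y x) with h | h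
    · rw [min_eq_left h]
      simp only [gp] at h ⊢
      have hS : (d x y) + (d z w) ≤ (d x z) + (d y w) := by
        linarith [hs y x, hs z x, hs z y, hs w x, hs w y, hs w z]
      linarith [core (d y z) (d x z) (d x y) (d z w) (d y w) (d x w) _ _ _ _ N1 B1_ba B1_ab B1_pb N4 B4_bf B4_fb B4_eb N3 B3_af B3_fa B3_ca N2 B2_pe B2_ep B2_cp hS, hs y x, hs z x, hs z y, hs w x, hs w y, hs w z]
    · rw [min_eq_right h]
      simp only [gp] at h ⊢
      have hS : (d x z) + (d y w) ≤ (d x y) + (d z w) := by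
        linarith [hs y x, hs z x, hs z y, hs w x, hs w y, hs w z]
      linarith [core (d y z) (d x y) (d x z) (d y w) (d z w) (d x w) _ _ _ _ N1 B1_bp B1_pb B1_ab N4 B4_be B4_eb B4_fb N2 B2_pe B2_ep B2_cp N3 B3_af B3_fa B3_ca hS, hs y x, hs z x, hs z y, hs w x, hs w y, hs w z]

lemma tp_nonneg (d : Xt → Xt → ℝ) (hs : ∀ a b, d a b = d b a) (x y z : Xt) :
    0 ≤ tp d x y z := by
  have hB : tpt d x y z ≤ tp d x y z := by
    simp only [tp]
    exact ((le_max_left _ _).trans (le_max_left _ _)).trans (le_max_left _ _)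
  have hA : tpt d x z y ≤ tp d x y z := by
    simp only [tp]
    exact ((le_max_right _ _).trans (le_max_left _ _)).trans (le_max_left _ _)
  have hC : tpt d y x z ≤ tp d x y z := by
    simp only [tp]
    exact ((le_max_left _ _).trans (le_max_right _ _)).trans (le_max_left _ _)
  simp only [tpt] at hA hB hC
  rw [hs z y] at hA
  rw [hs y x] at hC
  exact nonneg_aux (d x y) (d x z) (d y z) _ hA hB hC

lemma fp_nonneg (d : Xt → Xt → ℝ) (hs : ∀ a b, d a b = d b a) (w x y z : Xt) :
    0 ≤ fp d w x y z := by
  have h1 : fpt d w x y z ≤ fp d w x y z := by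
    simp only [fp]
    exact ((le_max_left _ _).trans (le_max_left _ _)).trans (le_max_left _ _)
  have h2 : fpt d w x z y ≤ fp d w x y z := by
    simp only [fp]
    exact ((le_max_right _ _).trans (le_max_left _ _)).trans (le_max_left _ _)
  have h4 : fpt d w y z x ≤ fp d w x y z := by
    simp only [fp]
    exact ((le_max_right _ _).trans (le_max_right _ _)).trans (le_max_left _ _)
  simp only [fpt, gp, min_def] at h1 h2 h4
  split_ifs at h1 h2 h4 <;>
    linarith [hs y x, hs z x, hs z y, hs w x, hs w y, hs w z]

lemma mean4 {t1 t2 t3 t4 q : ℝ} (h1 : 0 ≤ t1) (h2 : 0 ≤ t2) (h3 : 0 ≤ t3) (h4 : 0 ≤ t4)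
    (hq : 1 ≤ q) :
    ((t1 + t2 + t3 + t4) / 4) ^ q ≤ (t1 ^ q + t2 ^ q + t3 ^ q + t4 ^ q) / 4 := by
  have h := Real.rpow_arith_mean_le_arith_mean_rpow Finset.univ (fun _ : Fin 4 => (1 : ℝ) / 4)
      ![t1, t2, t3, t4] (fun i _ => by norm_num) (by simp)
      (fun i _ => by fin_cases i <;> simpa) hq
  simp only [Fin.sum_univ_four, Matrix.cons_val_zero, Matrix.cons_val_one, Matrix.head_cons,
    Matrix.cons_val_two, Matrix.tail_cons, Matrix.cons_val_three] at h
  have e1 : (t1 + t2 + t3 + t4) / 4 = 1 / 4 * t1 + 1 / 4 * t2 + 1 / 4 * t3 + 1 / 4 * t4 := by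
    ring
  rw [e1]
  linarith

lemma count {X : Type*} [Fintype X] [DecidableEq X] (a b c : X) (P : Prop) [Decidable P]
    (r : ℝ) (hP : P → a ≠ b ∧ a ≠ c ∧ b ≠ c) :
    ∑ v : X, (if P ∧ v ≠ a ∧ v ≠ b ∧ v ≠ c then r else 0)
      = if P then ((Fintype.card X - 3 : ℕ) : ℝ) * r else 0 := by
  by_cases hp : P
  · rw [if_pos hp]
    obtain ⟨h1, h2, h3⟩ := hP hp
    have : ∀ v : X, (if P ∧ v ≠ a ∧ v ≠ b ∧ v ≠ c then r else 0)
        = if v ∈ ({a, b, c} : Finset X) then 0 else r := by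
      intro v
      by_cases hv : v ∈ ({a, b, c} : Finset X)
      · rw [if_pos hv, if_neg]
        simp only [Finset.mem_insert, Finset.mem_singleton] at hv
        rintro ⟨-, hva, hvb, hvc⟩
        rcases hv with h | h | h <;> [exact hva h; exact hvb h; exact hvc h]
      · rw [if_neg hv, if_pos]
        simp only [Finset.mem_insert, Finset.mem_singleton, not_or] at hv
        exact ⟨hp, hv.1, hv.2.1, hv.2.2⟩
    rw [Finset.sum_congr rfl fun v _ => this v]
    have hstep : (∑ v : X, if v ∈ ({a, b, c} : Finset X) then 0 else r)
        = ∑ v ∈ Finset.univ.filter (fun v => v ∉ ({a, b, c} : Finset X)), r := by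
      rw [Finset.sum_filter]
      exact Finset.sum_congr rfl fun v _ => (ite_not _ _ _).symm
    rw [hstep, Finset.sum_const]
    have hcard : (Finset.univ.filter (fun v => v ∉ ({a, b, c} : Finset X))).card
        = Fintype.card X - 3 := by
      rw [Finset.filter_not, Finset.filter_mem_eq_inter, Finset.univ_inter]
      rw [Finset.card_sdiff_of_subset (Finset.subset_univ _), Finset.card_univ]
      congr 1
      rw [Finset.card_insert_of_notMem, Finset.card_insert_of_notMem, Finset.card_singleton]
      · simp [h3]
      · simp [h1, h2]
    rw [hcard, nsmul_eq_mul]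

  · rw [if_neg hp]
    apply Finset.sum_eq_zero
    intro v _
    rw [if_neg]
    rintro ⟨h, -⟩
    exact hp h

lemma pointwise {Xt : Type*} (d : Xt → Xt → ℝ) (hs : ∀ a b, d a b = d b a)
    (q : ℝ) (hq : 1 ≤ q) (w x y z : Xt) :
    fp d w x y z ^ q ≤
      2 ^ q / 4 * (tp d x y z ^ q + tp d x y w ^ q + tp d x z w ^ q + tp d y z w ^ q) := by
  have n1 := tp_nonneg d hs x y z
  have n2 := tp_nonneg d hs x y w
  have n3 := tp_nonneg d hs x z w
  have n4 := tp_nonneg d hs y z w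
  have hk := key d hs w x y z
  have hq0 : 0 ≤ q := le_trans zero_le_one hq
  have h1 : fp d w x y z ^ q ≤ ((tp d x y z + tp d x y w + tp d x z w + tp d y z w) / 2) ^ q :=
    Real.rpow_le_rpow (fp_nonneg d hs w x y z) hk hq0
  have e2 : (tp d x y z + tp d x y w + tp d x z w + tp d y z w) / 2
      = 2 * ((tp d x y z + tp d x y w + tp d x z w + tp d y z w) / 4) := by ring
  have h2 : ((tp d x y z + tp d x y w + tp d x z w + tp d y z w) / 2) ^ q
      = 2 ^ q * ((tp d x y z + tp d x y w + tp d x z w + tp d y z w) / 4) ^ q := by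
    rw [e2, Real.mul_rpow (by norm_num) (by linarith)]
  have h3 := mean4 n1 n2 n3 n4 hq
  have h2q : (0:ℝ) ≤ 2 ^ q := Real.rpow_nonneg (by norm_num) q
  calc fp d w x y z ^ q ≤ ((tp d x y z + tp d x y w + tp d x z w + tp d y z w) / 2) ^ q := h1
    _ = 2 ^ q * ((tp d x y z + tp d x y w + tp d x z w + tp d y z w) / 4) ^ q := h2
    _ ≤ 2 ^ q * ((tp d x y z ^ q + tp d x y w ^ q + tp d x z w ^ q + tp d y z w ^ q) / 4) :=
        mul_le_mul_of_nonneg_left h3 h2q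
    _ = 2 ^ q / 4 * (tp d x y z ^ q + tp d x y w ^ q + tp d x z w ^ q + tp d y z w ^ q) := by
        ring

/-- The `q`-average hyperbolicity is at most twice the `q`-average ultrametricity. -/
theorem avgHyp_le_two_avgUM {X : Type*} [MetricSpace X] [Fintype X] [DecidableEq X]
    (hn : 4 ≤ Fintype.card X) (q : ℝ) (hq : 1 ≤ q) :
    let avgHypPow : ℝ :=
      ((∑ w : X, ∑ x : X, ∑ y : X, ∑ z : X,
          if x ≠ y ∧ x ≠ z ∧ y ≠ z ∧ x ≠ w ∧ y ≠ w ∧ z ≠ w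
          then (fp (fun a b => dist a b) w x y z) ^ q else 0) / 24) /
        ((Fintype.card X).choose 4 : ℝ)
    let avgUMPow : ℝ :=
      ((∑ x : X, ∑ y : X, ∑ z : X,
          if x ≠ y ∧ x ≠ z ∧ y ≠ z
          then (tp (fun a b => dist a b) x y z) ^ q else 0) / 6) /
        ((Fintype.card X).choose 3 : ℝ)
    avgHypPow ≤ 2 ^ q * avgUMPow := by
  intro avgHypPow avgUMPow
  show ((∑ w : X, ∑ x : X, ∑ y : X, ∑ z : X,
          if x ≠ y ∧ x ≠ z ∧ y ≠ z ∧ x ≠ w ∧ y ≠ w ∧ z ≠ w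
          then (fp (fun a b => dist a b) w x y z) ^ q else 0) / 24) /
        ((Fintype.card X).choose 4 : ℝ)
      ≤ 2 ^ q * (((∑ x : X, ∑ y : X, ∑ z : X,
          if x ≠ y ∧ x ≠ z ∧ y ≠ z
          then (tp (fun a b => dist a b) x y z) ^ q else 0) / 6) /
        ((Fintype.card X).choose 3 : ℝ))
  set d : X → X → ℝ := fun a b => dist a b with hd
  have hs : ∀ a b : X, d a b = d b a := fun a b => dist_comm a b
  set n := Fintype.card X with hncard
  set St : ℝ := ∑ x : X, ∑ y : X, ∑ z : X,
      if x ≠ y ∧ x ≠ z ∧ y ≠ z then (tp d x y z) ^ q else 0 with hSt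
  set Sq : ℝ := ∑ w : X, ∑ x : X, ∑ y : X, ∑ z : X,
      if x ≠ y ∧ x ≠ z ∧ y ≠ z ∧ x ≠ w ∧ y ≠ w ∧ z ≠ w
      then (fp d w x y z) ^ q else 0 with hSq
  -- Step A : bound Sq by the four tp-sums
  have hA : Sq ≤ 2 ^ q / 4 *
      ((∑ w : X, ∑ x : X, ∑ y : X, ∑ z : X,
          if x ≠ y ∧ x ≠ z ∧ y ≠ z ∧ x ≠ w ∧ y ≠ w ∧ z ≠ w then (tp d x y z) ^ q else 0) +
       (∑ w : X, ∑ x : X, ∑ y : X, ∑ z : X,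
          if x ≠ y ∧ x ≠ z ∧ y ≠ z ∧ x ≠ w ∧ y ≠ w ∧ z ≠ w then (tp d x y w) ^ q else 0) +
       (∑ w : X, ∑ x : X, ∑ y : X, ∑ z : X,
          if x ≠ y ∧ x ≠ z ∧ y ≠ z ∧ x ≠ w ∧ y ≠ w ∧ z ≠ w then (tp d x z w) ^ q else 0) +
       (∑ w : X, ∑ x : X, ∑ y : X, ∑ z : X,
          if x ≠ y ∧ x ≠ z ∧ y ≠ z ∧ x ≠ w ∧ y ≠ w ∧ z ≠ w then (tp d y z w) ^ q else 0)) := by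
    have step1 : Sq ≤ ∑ w : X, ∑ x : X, ∑ y : X, ∑ z : X,
        (2 ^ q / 4 *
          ((if x ≠ y ∧ x ≠ z ∧ y ≠ z ∧ x ≠ w ∧ y ≠ w ∧ z ≠ w then (tp d x y z) ^ q else 0) +
           (if x ≠ y ∧ x ≠ z ∧ y ≠ z ∧ x ≠ w ∧ y ≠ w ∧ z ≠ w then (tp d x y w) ^ q else 0) +
           (if x ≠ y ∧ x ≠ z ∧ y ≠ z ∧ x ≠ w ∧ y ≠ w ∧ z ≠ w then (tp d x z w) ^ q else 0) +
           (if x ≠ y ∧ x ≠ z ∧ y ≠ z ∧ x ≠ w ∧ y ≠ w ∧ z ≠ w then (tp d y z w) ^ q else 0))) := by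
      rw [hSq]
      apply Finset.sum_le_sum; intro w _
      apply Finset.sum_le_sum; intro x _
      apply Finset.sum_le_sum; intro y _
      apply Finset.sum_le_sum; intro z _
      by_cases hc : x ≠ y ∧ x ≠ z ∧ y ≠ z ∧ x ≠ w ∧ y ≠ w ∧ z ≠ w
      · simp only [if_pos hc]
        exact pointwise d hs q hq w x y z
      · simp only [if_neg hc]
        norm_num
    refine le_trans step1 (le_of_eq ?_)
    simp only [mul_add, Finset.sum_add_distrib, ← Finset.mul_sum]
  -- Step B : each of the four sums equals (n-3) * St
  have eV1 : (∑ w : X, ∑ x : X, ∑ y : X, ∑ z : X,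
      if x ≠ y ∧ x ≠ z ∧ y ≠ z ∧ x ≠ w ∧ y ≠ w ∧ z ≠ w then (tp d x y z) ^ q else 0)
      = ((n - 3 : ℕ) : ℝ) * St := by
    have e1 : (∑ w : X, ∑ x : X, ∑ y : X, ∑ z : X,
        if x ≠ y ∧ x ≠ z ∧ y ≠ z ∧ x ≠ w ∧ y ≠ w ∧ z ≠ w then (tp d x y z) ^ q else 0)
        = ∑ x : X, ∑ y : X, ∑ z : X, ∑ w : X,
        if x ≠ y ∧ x ≠ z ∧ y ≠ z ∧ x ≠ w ∧ y ≠ w ∧ z ≠ w then (tp d x y z) ^ q else 0 := by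
      rw [Finset.sum_comm]
      refine Finset.sum_congr rfl fun x _ => ?_
      rw [Finset.sum_comm]
      refine Finset.sum_congr rfl fun y _ => ?_
      rw [Finset.sum_comm]
    rw [e1, hSt, Finset.mul_sum]
    refine Finset.sum_congr rfl fun x _ => ?_
    rw [Finset.mul_sum]
    refine Finset.sum_congr rfl fun y _ => ?_
    rw [Finset.mul_sum]
    refine Finset.sum_congr rfl fun z _ => ?_
    have e2 : ∀ w : X, (if x ≠ y ∧ x ≠ z ∧ y ≠ z ∧ x ≠ w ∧ y ≠ w ∧ z ≠ w
          then (tp d x y z) ^ q else 0)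
        = (if (x ≠ y ∧ x ≠ z ∧ y ≠ z) ∧ w ≠ x ∧ w ≠ y ∧ w ≠ z then (tp d x y z) ^ q else 0) := by
      intro w
      refine if_congr ⟨?_, ?_⟩ rfl rfl
      · rintro ⟨h1, h2, h3, h4, h5, h6⟩
        exact ⟨⟨h1, h2, h3⟩, h4.symm, h5.symm, h6.symm⟩
      · rintro ⟨⟨h1, h2, h3⟩, h4, h5, h6⟩
        exact ⟨h1, h2, h3, h4.symm, h5.symm, h6.symm⟩
    rw [Finset.sum_congr rfl fun w _ => e2 w,
      count x y z (x ≠ y ∧ x ≠ z ∧ y ≠ z) ((tp d x y z) ^ q) (fun h => h)]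
    rw [hncard]
    split_ifs
    · rfl
    · rw [mul_zero]
  have eV2 : (∑ w : X, ∑ x : X, ∑ y : X, ∑ z : X, if x ≠ y ∧ x ≠ z ∧ y ≠ z ∧ x ≠ w ∧ y ≠ w ∧ z ≠ w then (tp d x y w) ^ q else 0)
      = ((n - 3 : ℕ) : ℝ) * St := by
    have e1 : (∑ w : X, ∑ x : X, ∑ y : X, ∑ z : X, if x ≠ y ∧ x ≠ z ∧ y ≠ z ∧ x ≠ w ∧ y ≠ w ∧ z ≠ w then (tp d x y w) ^ q else 0)
        = ∑ w : X, ∑ x : X, ∑ y : X, ∑ z : X, if x ≠ y ∧ x ≠ z ∧ y ≠ z ∧ x ≠ w ∧ y ≠ w ∧ z ≠ w then (tp d x y w) ^ q else 0 := by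
      rfl
    have e2 : (∑ w : X, ∑ x : X, ∑ y : X, ∑ z : X, if x ≠ y ∧ x ≠ z ∧ y ≠ z ∧ x ≠ w ∧ y ≠ w ∧ z ≠ w then (tp d x y w) ^ q else 0)
        = ∑ w : X, ∑ x : X, ∑ y : X, if x ≠ y ∧ x ≠ w ∧ y ≠ w then ((Fintype.card X - 3 : ℕ) : ℝ) * (tp d x y w) ^ q else 0 := by
      refine Finset.sum_congr rfl fun w _ => ?_
      refine Finset.sum_congr rfl fun x _ => ?_
      refine Finset.sum_congr rfl fun y _ => ?_
      have ec : ∀ z : X, (if x ≠ y ∧ x ≠ z ∧ y ≠ z ∧ x ≠ w ∧ y ≠ w ∧ z ≠ w then (tp d x y w) ^ q else 0)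
          = (if (x ≠ y ∧ x ≠ w ∧ y ≠ w) ∧ z ≠ x ∧ z ≠ y ∧ z ≠ w then (tp d x y w) ^ q else 0) := by
        intro z
        refine if_congr ⟨?_, ?_⟩ rfl rfl
        · rintro ⟨h1, h2, h3, h4, h5, h6⟩
          exact ⟨⟨h1, h4, h5⟩, h2.symm, h3.symm, h6⟩
        · rintro ⟨⟨h1, h2, h3⟩, k1, k2, k3⟩
          exact ⟨h1, k1.symm, k2.symm, h2, h3, k3⟩
      rw [Finset.sum_congr rfl fun z _ => ec z,
        count x y w (x ≠ y ∧ x ≠ w ∧ y ≠ w) ((tp d x y w) ^ q) (fun h => h)]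
    have e3 : (∑ w : X, ∑ x : X, ∑ y : X, if x ≠ y ∧ x ≠ w ∧ y ≠ w then ((Fintype.card X - 3 : ℕ) : ℝ) * (tp d x y w) ^ q else 0) = ∑ x : X, ∑ y : X, ∑ w : X, if x ≠ y ∧ x ≠ w ∧ y ≠ w then ((Fintype.card X - 3 : ℕ) : ℝ) * (tp d x y w) ^ q else 0 := by
      rw [Finset.sum_comm]
      exact Finset.sum_congr rfl fun _ _ => Finset.sum_comm
    rw [e1, e2, e3, hSt, Finset.mul_sum]
    refine Finset.sum_congr rfl fun _ _ => ?_
    rw [Finset.mul_sum]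
    refine Finset.sum_congr rfl fun _ _ => ?_
    rw [Finset.mul_sum]
    refine Finset.sum_congr rfl fun _ _ => ?_
    rw [hncard]
    split_ifs
    · rfl
    · rw [mul_zero]
  have eV3 : (∑ w : X, ∑ x : X, ∑ y : X, ∑ z : X, if x ≠ y ∧ x ≠ z ∧ y ≠ z ∧ x ≠ w ∧ y ≠ w ∧ z ≠ w then (tp d x z w) ^ q else 0)
      = ((n - 3 : ℕ) : ℝ) * St := by
    have e1 : (∑ w : X, ∑ x : X, ∑ y : X, ∑ z : X, if x ≠ y ∧ x ≠ z ∧ y ≠ z ∧ x ≠ w ∧ y ≠ w ∧ z ≠ w then (tp d x z w) ^ q else 0)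
        = ∑ w : X, ∑ x : X, ∑ z : X, ∑ y : X, if x ≠ y ∧ x ≠ z ∧ y ≠ z ∧ x ≠ w ∧ y ≠ w ∧ z ≠ w then (tp d x z w) ^ q else 0 := by
      refine Finset.sum_congr rfl fun w _ => ?_
      refine Finset.sum_congr rfl fun x _ => ?_
      rw [Finset.sum_comm]
    have e2 : (∑ w : X, ∑ x : X, ∑ z : X, ∑ y : X, if x ≠ y ∧ x ≠ z ∧ y ≠ z ∧ x ≠ w ∧ y ≠ w ∧ z ≠ w then (tp d x z w) ^ q else 0)
        = ∑ w : X, ∑ x : X, ∑ z : X, if x ≠ z ∧ x ≠ w ∧ z ≠ w then ((Fintype.card X - 3 : ℕ) : ℝ) * (tp d x z w) ^ q else 0 := by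
      refine Finset.sum_congr rfl fun w _ => ?_
      refine Finset.sum_congr rfl fun x _ => ?_
      refine Finset.sum_congr rfl fun z _ => ?_
      have ec : ∀ y : X, (if x ≠ y ∧ x ≠ z ∧ y ≠ z ∧ x ≠ w ∧ y ≠ w ∧ z ≠ w then (tp d x z w) ^ q else 0)
          = (if (x ≠ z ∧ x ≠ w ∧ z ≠ w) ∧ y ≠ x ∧ y ≠ z ∧ y ≠ w then (tp d x z w) ^ q else 0) := by
        intro y
        refine if_congr ⟨?_, ?_⟩ rfl rfl
        · rintro ⟨h1, h2, h3, h4, h5, h6⟩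
          exact ⟨⟨h2, h4, h6⟩, h1.symm, h3, h5⟩
        · rintro ⟨⟨h1, h2, h3⟩, k1, k2, k3⟩
          exact ⟨k1.symm, h1, k2, h2, k3, h3⟩
      rw [Finset.sum_congr rfl fun y _ => ec y,
        count x z w (x ≠ z ∧ x ≠ w ∧ z ≠ w) ((tp d x z w) ^ q) (fun h => h)]
    have e3 : (∑ w : X, ∑ x : X, ∑ z : X, if x ≠ z ∧ x ≠ w ∧ z ≠ w then ((Fintype.card X - 3 : ℕ) : ℝ) * (tp d x z w) ^ q else 0) = ∑ x : X, ∑ z : X, ∑ w : X, if x ≠ z ∧ x ≠ w ∧ z ≠ w then ((Fintype.card X - 3 : ℕ) : ℝ) * (tp d x z w) ^ q else 0 := by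
      rw [Finset.sum_comm]
      exact Finset.sum_congr rfl fun _ _ => Finset.sum_comm
    rw [e1, e2, e3, hSt, Finset.mul_sum]
    refine Finset.sum_congr rfl fun _ _ => ?_
    rw [Finset.mul_sum]
    refine Finset.sum_congr rfl fun _ _ => ?_
    rw [Finset.mul_sum]
    refine Finset.sum_congr rfl fun _ _ => ?_
    rw [hncard]
    split_ifs
    · rfl
    · rw [mul_zero]
  have eV4 : (∑ w : X, ∑ x : X, ∑ y : X, ∑ z : X, if x ≠ y ∧ x ≠ z ∧ y ≠ z ∧ x ≠ w ∧ y ≠ w ∧ z ≠ w then (tp d y z w) ^ q else 0)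
      = ((n - 3 : ℕ) : ℝ) * St := by
    have e1 : (∑ w : X, ∑ x : X, ∑ y : X, ∑ z : X, if x ≠ y ∧ x ≠ z ∧ y ≠ z ∧ x ≠ w ∧ y ≠ w ∧ z ≠ w then (tp d y z w) ^ q else 0)
        = ∑ w : X, ∑ y : X, ∑ z : X, ∑ x : X, if x ≠ y ∧ x ≠ z ∧ y ≠ z ∧ x ≠ w ∧ y ≠ w ∧ z ≠ w then (tp d y z w) ^ q else 0 := by
      refine Finset.sum_congr rfl fun w _ => ?_
      rw [Finset.sum_comm]
      refine Finset.sum_congr rfl fun y _ => ?_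
      rw [Finset.sum_comm]
    have e2 : (∑ w : X, ∑ y : X, ∑ z : X, ∑ x : X, if x ≠ y ∧ x ≠ z ∧ y ≠ z ∧ x ≠ w ∧ y ≠ w ∧ z ≠ w then (tp d y z w) ^ q else 0)
        = ∑ w : X, ∑ y : X, ∑ z : X, if y ≠ z ∧ y ≠ w ∧ z ≠ w then ((Fintype.card X - 3 : ℕ) : ℝ) * (tp d y z w) ^ q else 0 := by
      refine Finset.sum_congr rfl fun w _ => ?_
      refine Finset.sum_congr rfl fun y _ => ?_
      refine Finset.sum_congr rfl fun z _ => ?_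
      have ec : ∀ x : X, (if x ≠ y ∧ x ≠ z ∧ y ≠ z ∧ x ≠ w ∧ y ≠ w ∧ z ≠ w then (tp d y z w) ^ q else 0)
          = (if (y ≠ z ∧ y ≠ w ∧ z ≠ w) ∧ x ≠ y ∧ x ≠ z ∧ x ≠ w then (tp d y z w) ^ q else 0) := by
        intro x
        refine if_congr ⟨?_, ?_⟩ rfl rfl
        · rintro ⟨h1, h2, h3, h4, h5, h6⟩
          exact ⟨⟨h3, h5, h6⟩, h1, h2, h4⟩
        · rintro ⟨⟨h1, h2, h3⟩, k1, k2, k3⟩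
          exact ⟨k1, k2, h1, k3, h2, h3⟩
      rw [Finset.sum_congr rfl fun x _ => ec x,
        count y z w (y ≠ z ∧ y ≠ w ∧ z ≠ w) ((tp d y z w) ^ q) (fun h => h)]
    have e3 : (∑ w : X, ∑ y : X, ∑ z : X, if y ≠ z ∧ y ≠ w ∧ z ≠ w then ((Fintype.card X - 3 : ℕ) : ℝ) * (tp d y z w) ^ q else 0) = ∑ y : X, ∑ z : X, ∑ w : X, if y ≠ z ∧ y ≠ w ∧ z ≠ w then ((Fintype.card X - 3 : ℕ) : ℝ) * (tp d y z w) ^ q else 0 := by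
      rw [Finset.sum_comm]
      exact Finset.sum_congr rfl fun _ _ => Finset.sum_comm
    rw [e1, e2, e3, hSt, Finset.mul_sum]
    refine Finset.sum_congr rfl fun _ _ => ?_
    rw [Finset.mul_sum]
    refine Finset.sum_congr rfl fun _ _ => ?_
    rw [Finset.mul_sum]
    refine Finset.sum_congr rfl fun _ _ => ?_
    rw [hncard]
    split_ifs
    · rfl
    · rw [mul_zero]
  -- combine everything
  have hmain : Sq ≤ 2 ^ q * (((n - 3 : ℕ) : ℝ) * St) := by
    calc Sq ≤ _ := hA
      _ = 2 ^ q / 4 * (((n - 3 : ℕ) : ℝ) * St + ((n - 3 : ℕ) : ℝ) * St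
            + ((n - 3 : ℕ) : ℝ) * St + ((n - 3 : ℕ) : ℝ) * St) := by
          rw [eV1, eV2, eV3, eV4]
      _ = 2 ^ q * (((n - 3 : ℕ) : ℝ) * St) := by ring
  have hSt0 : (0:ℝ) ≤ St := by
    rw [hSt]
    refine Finset.sum_nonneg fun x _ => Finset.sum_nonneg fun y _ =>
      Finset.sum_nonneg fun z _ => ?_
    split_ifs
    · exact Real.rpow_nonneg (tp_nonneg d hs x y z) q
    · exact le_refl 0
  have hC4 : (0:ℝ) < ((n.choose 4 : ℕ) : ℝ) := by
    exact_mod_cast Nat.choose_pos (by omega)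
  have hC3 : (0:ℝ) < ((n.choose 3 : ℕ) : ℝ) := by
    exact_mod_cast Nat.choose_pos (by omega)
  have hch : ((n - 3 : ℕ) : ℝ) * ((n.choose 3 : ℕ) : ℝ) = 4 * ((n.choose 4 : ℕ) : ℝ) := by
    have h := (Nat.choose_succ_right_eq n 3).symm
    calc ((n - 3 : ℕ) : ℝ) * ((n.choose 3 : ℕ) : ℝ)
        = ((n.choose 3 * (n - 3) : ℕ) : ℝ) := by push_cast; ring
      _ = ((n.choose 4 * 4 : ℕ) : ℝ) := by rw [h]
      _ = 4 * ((n.choose 4 : ℕ) : ℝ) := by push_cast; ring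
  calc Sq / 24 / ((n.choose 4 : ℕ) : ℝ)
      ≤ (2 ^ q * (((n - 3 : ℕ) : ℝ) * St)) / 24 / ((n.choose 4 : ℕ) : ℝ) := by gcongr
    _ = 2 ^ q * (St / 6 / ((n.choose 3 : ℕ) : ℝ)) := by
        field_simp
        linear_combination 6 * St * hch
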